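/- arXiv:1710.00408 — 2 statements merged into one kernel-verified Lean document; each statement's English description precedes it below -/
import Mathlib

section
/- Let n ≥ 2, N = 2n, h = 1/n, d ≥ 1, and c ∈ ℝ. Then A_h^D = R_{o,h}^{⊗d} A_h^P E_{o,h}^{⊗d}, where A_h^D and A_h^P are the d-dimensional discrete Dirichlet and periodic reaction–diffusion matrices. -/
open Matrix Finset

noncomputable section

/-- The tridiagonal matrix `tridiag(-1, 2, -1)` of size `m × m` (0-based indexing). -/
def tridiag (m : ℕ) : Matrix (Fin m) (Fin m) ℝ :=
  Matrix.of fun i j =>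
    if (i : ℕ) = (j : ℕ) then 2
    else if (i : ℕ) + 1 = (j : ℕ) ∨ (j : ℕ) + 1 = (i : ℕ) then -1 else 0

/-- The odd extension operator `E_{o,h} : ℝ^{n-1} → ℝ^{2n}`, sending the basis vector
`e_i^{n-1}` (math index `i = 1,…,n-1`) to `e_i^{2n} - e_{2n-i}^{2n}`.
In 0-based indexing, column `i` has entry `1` in row `i` and `-1` in row `2n - i - 2`. -/
def oddExt (n : ℕ) : Matrix (Fin (2 * n)) (Fin (n - 1)) ℝ :=
  Matrix.of fun k i =>
    if (k : ℕ) = (i : ℕ) then 1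
    else if (k : ℕ) + (i : ℕ) + 2 = 2 * n then -1 else 0

/-- The restriction operator `R_{o,h} = (1/2) E_{o,h}ᵀ`. -/
def oddRestr (n : ℕ) : Matrix (Fin (n - 1)) (Fin (2 * n)) ℝ :=
  (2 : ℝ)⁻¹ • (oddExt n)ᵀ

/-- The Dirichlet matrix `T_h^D = (1/h²) · tridiag(-1, 2, -1)`, with `h = 1/n`
(so `1/h² = n²`). -/
def ThD (n : ℕ) : Matrix (Fin (n - 1)) (Fin (n - 1)) ℝ :=
  ((n : ℝ) ^ 2) • tridiag (n - 1)

/-- The periodic matrix `T_h^P = (1/h²) · (tridiag(-1,2,-1) - e₁ e_Nᵀ - e_N e₁ᵀ)`,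
with `h = 1/n`, `N = 2n` (0-based: corners at `(0, 2n-1)` and `(2n-1, 0)`). -/
def ThP (n : ℕ) : Matrix (Fin (2 * n)) (Fin (2 * n)) ℝ :=
  ((n : ℝ) ^ 2) •
    (tridiag (2 * n)
      - Matrix.of (fun (i j : Fin (2 * n)) => if (i : ℕ) = 0 ∧ (j : ℕ) = 2 * n - 1 then 1 else 0)
      - Matrix.of (fun (i j : Fin (2 * n)) => if (i : ℕ) = 2 * n - 1 ∧ (j : ℕ) = 0 then 1 else 0))

/-- The `d`-fold Kronecker power `X^{⊗d}`, where `ℝ^{a^d}` is identified with the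
space of functions `(Fin d → Fin a) → ℝ`. -/
def kronPow {a b : ℕ} (d : ℕ) (X : Matrix (Fin a) (Fin b) ℝ) :
    Matrix (Fin d → Fin a) (Fin d → Fin b) ℝ :=
  Matrix.of fun i j => ∏ t, X (i t) (j t)

/-- `Σ_{t=1}^d I^{⊗(t-1)} ⊗ T ⊗ I^{⊗(d-t)}` in the function-indexed representation. -/
def kronSumId {m : ℕ} (d : ℕ) (T : Matrix (Fin m) (Fin m) ℝ) :
    Matrix (Fin d → Fin m) (Fin d → Fin m) ℝ :=
  ∑ t : Fin d, Matrix.of fun i j =>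
    T (i t) (j t) * ∏ s ∈ Finset.univ.erase t, (if i s = j s then (1 : ℝ) else 0)

/-- The `d`-dimensional discrete Dirichlet reaction-diffusion matrix
`A_h^D = Σ_j I^{⊗(j-1)} ⊗ T_h^D ⊗ I^{⊗(d-j)} + c I^{⊗d}`. -/
def AD (n d : ℕ) (c : ℝ) : Matrix (Fin d → Fin (n - 1)) (Fin d → Fin (n - 1)) ℝ :=
  kronSumId d (ThD n) + c • 1

/-- The `d`-dimensional discrete periodic reaction-diffusion matrix
`A_h^P = Σ_j I^{⊗(j-1)} ⊗ T_h^P ⊗ I^{⊗(d-j)} + c I^{⊗d}`. -/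
def AP (n d : ℕ) (c : ℝ) : Matrix (Fin d → Fin (2 * n)) (Fin d → Fin (2 * n)) ℝ :=
  kronSumId d (ThP n) + c • 1

/-- A pair `(M^D, M^P)` is LFA-compatible with respect to an extension `E` and a
restriction `R` if `M^D = R M^P E` and `M^P` maps `range E` into itself. -/
def LFACompatible {α β : Type*} [Fintype α] [Fintype β]
    (E : Matrix α β ℝ) (R : Matrix β α ℝ)
    (MD : Matrix β β ℝ) (MP : Matrix α α ℝ) : Prop :=
  MD = R * MP * E ∧ ∀ v ∈ Set.range E.mulVec, MP *ᵥ v ∈ Set.range E.mulVec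


lemma sum_prod_fun {d a : ℕ} (g : Fin d → Fin a → ℝ) :
    ∑ k : Fin d → Fin a, ∏ t, g t (k t) = ∏ t, ∑ x, g t x := by
  rw [Finset.prod_univ_sum, Fintype.piFinset_univ]

lemma kron_mul_left {a b d : ℕ} (R : Matrix (Fin b) (Fin a) ℝ)
    (F : Fin d → Matrix (Fin a) (Fin a) ℝ) :
    kronPow d R * (Matrix.of (fun i j => ∏ t, F t (i t) (j t)) :
        Matrix (Fin d → Fin a) (Fin d → Fin a) ℝ)
      = Matrix.of fun i j => ∏ t, (R * F t) (i t) (j t) := by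
  ext i j
  simp only [Matrix.mul_apply, kronPow, Matrix.of_apply]
  calc ∑ k : Fin d → Fin a, (∏ t, R (i t) (k t)) * ∏ t, F t (k t) (j t)
      = ∑ k : Fin d → Fin a, ∏ t, (R (i t) (k t) * F t (k t) (j t)) := by
        simp [Finset.prod_mul_distrib]
    _ = ∏ t, ∑ x, R (i t) x * F t x (j t) :=
        sum_prod_fun (fun t x => R (i t) x * F t x (j t))
    _ = _ := by simp [Matrix.mul_apply]

lemma kron_mul_right {a b d : ℕ} (E : Matrix (Fin a) (Fin b) ℝ)
    (F : Fin d → Matrix (Fin b) (Fin a) ℝ) :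
    (Matrix.of (fun i j => ∏ t, F t (i t) (j t)) :
        Matrix (Fin d → Fin b) (Fin d → Fin a) ℝ) * kronPow d E
      = Matrix.of fun i j => ∏ t, (F t * E) (i t) (j t) := by
  ext i j
  simp only [Matrix.mul_apply, kronPow, Matrix.of_apply]
  calc ∑ k : Fin d → Fin a, (∏ t, F t (i t) (k t)) * ∏ t, E (k t) (j t)
      = ∑ k : Fin d → Fin a, ∏ t, (F t (i t) (k t) * E (k t) (j t)) := by
        simp [Finset.prod_mul_distrib]
    _ = ∏ t, ∑ x, F t (i t) x * E x (j t) :=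
        sum_prod_fun (fun t x => F t (i t) x * E x (j t))
    _ = _ := by simp [Matrix.mul_apply]

lemma kronPow_one {a d : ℕ} : kronPow d (1 : Matrix (Fin a) (Fin a) ℝ) = 1 := by
  ext i j
  simp only [kronPow, Matrix.of_apply, Matrix.one_apply]
  by_cases h : i = j
  · subst h; simp
  · rw [if_neg h]
    obtain ⟨t, ht⟩ := Function.ne_iff.mp h
    exact Finset.prod_eq_zero (Finset.mem_univ t) (by simp [if_neg ht])

lemma kronPow_mul {a b d : ℕ} (R : Matrix (Fin b) (Fin a) ℝ) (E : Matrix (Fin a) (Fin b) ℝ) :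
    kronPow d R * kronPow d E = kronPow d (R * E) := by
  have h := kron_mul_right (d := d) E (fun _ => R)
  simpa [kronPow] using h

lemma kronSumId_eq {m d : ℕ} (T : Matrix (Fin m) (Fin m) ℝ) :
    kronSumId d T = ∑ t : Fin d,
      (Matrix.of (fun i j => ∏ s, (if s = t then T else 1) (i s) (j s)) :
        Matrix (Fin d → Fin m) (Fin d → Fin m) ℝ) := by
  unfold kronSumId
  refine Finset.sum_congr rfl fun t _ => ?_
  ext i j
  simp only [Matrix.of_apply]
  rw [← Finset.mul_prod_erase Finset.univ _ (Finset.mem_univ t)]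
  rw [if_pos rfl]
  congr 1
  refine Finset.prod_congr rfl fun s hs => ?_
  rw [if_neg (Finset.ne_of_mem_erase hs), Matrix.one_apply]

lemma kron_sandwich {a b d : ℕ} (R : Matrix (Fin b) (Fin a) ℝ) (E : Matrix (Fin a) (Fin b) ℝ)
    (T : Matrix (Fin a) (Fin a) ℝ) (hRE : R * E = 1) :
    kronPow d R * kronSumId d T * kronPow d E = kronSumId d (R * T * E) := by
  rw [kronSumId_eq T, kronSumId_eq (R * T * E), Matrix.mul_sum, Matrix.sum_mul]
  refine Finset.sum_congr rfl fun t _ => ?_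
  rw [kron_mul_left R (fun s => if s = t then T else 1),
    kron_mul_right E (fun s => R * (if s = t then T else 1))]
  ext i j
  simp only [Matrix.of_apply]
  refine Finset.prod_congr rfl fun s _ => ?_
  by_cases h : s = t <;> simp [h, hRE, Matrix.mul_one]

lemma oddExt_apply (n : ℕ) (hn : 2 ≤ n) (x : Fin (n - 1)) (l : Fin (2 * n))
    (h1 : (x : ℕ) < 2 * n) (h2 : 2 * n - x - 2 < 2 * n) :
    oddExt n l x = (if l = (⟨x, h1⟩ : Fin (2 * n)) then 1 else 0)
      - (if l = (⟨2 * n - x - 2, h2⟩ : Fin (2 * n)) then 1 else 0) := by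
  have hx := x.isLt
  simp only [oddExt, Matrix.of_apply, Fin.ext_iff]
  split_ifs <;> first | (exfalso; omega) | norm_num

lemma sandwich (n : ℕ) (hn : 2 ≤ n) (M : Matrix (Fin (2 * n)) (Fin (2 * n)) ℝ)
    (j i : Fin (n - 1))
    (hj1 : (j : ℕ) < 2 * n) (hj2 : 2 * n - j - 2 < 2 * n)
    (hi1 : (i : ℕ) < 2 * n) (hi2 : 2 * n - i - 2 < 2 * n) :
    (oddRestr n * M * oddExt n) j i =
      (2 : ℝ)⁻¹ * (M ⟨j, hj1⟩ ⟨i, hi1⟩ - M ⟨j, hj1⟩ ⟨2 * n - i - 2, hi2⟩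
        - M ⟨2 * n - j - 2, hj2⟩ ⟨i, hi1⟩ + M ⟨2 * n - j - 2, hj2⟩ ⟨2 * n - i - 2, hi2⟩) := by
  simp only [Matrix.mul_apply, oddRestr, Matrix.smul_apply, Matrix.transpose_apply,
    smul_eq_mul, oddExt_apply n hn _ _ hj1 hj2, oddExt_apply n hn _ _ hi1 hi2]
  simp only [sub_mul, mul_sub, ite_mul, mul_ite, one_mul, mul_one, zero_mul, mul_zero,
    Finset.sum_sub_distrib, Finset.sum_ite_eq', Finset.mem_univ, if_true, Finset.mul_sum,
    Finset.sum_ite_eq]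
  ring

lemma RE_eq_one (n : ℕ) (hn : 2 ≤ n) : oddRestr n * oddExt n = 1 := by
  have h : oddRestr n * oddExt n
      = oddRestr n * (1 : Matrix (Fin (2*n)) (Fin (2*n)) ℝ) * oddExt n := by
    rw [Matrix.mul_one]
  rw [h]
  ext j i
  have hj := j.isLt; have hi := i.isLt
  have hj1 : (j:ℕ) < 2*n := by omega
  have hj2 : 2*n - (j:ℕ) - 2 < 2*n := by omega
  have hi1 : (i:ℕ) < 2*n := by omega
  have hi2 : 2*n - (i:ℕ) - 2 < 2*n := by omega
  rw [sandwich n hn _ j i hj1 hj2 hi1 hi2]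
  simp only [Matrix.one_apply, Fin.ext_iff]
  split_ifs <;> first | (exfalso; omega) | norm_num

lemma RTE_eq (n : ℕ) (hn : 2 ≤ n) : oddRestr n * ThP n * oddExt n = ThD n := by
  ext j i
  have hj := j.isLt; have hi := i.isLt
  have hj1 : (j:ℕ) < 2*n := by omega
  have hj2 : 2*n - (j:ℕ) - 2 < 2*n := by omega
  have hi1 : (i:ℕ) < 2*n := by omega
  have hi2 : 2*n - (i:ℕ) - 2 < 2*n := by omega
  rw [sandwich n hn _ j i hj1 hj2 hi1 hi2]
  have e1 : ThP n ⟨j, hj1⟩ ⟨i, hi1⟩ = ThD n j i := by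
    simp only [ThP, ThD, tridiag, Matrix.smul_apply, Matrix.sub_apply, Matrix.of_apply,
      smul_eq_mul]
    split_ifs <;> first | (exfalso; omega) | ring
  have e2 : ThP n ⟨j, hj1⟩ ⟨2*n - (i:ℕ) - 2, hi2⟩ = 0 := by
    simp only [ThP, tridiag, Matrix.smul_apply, Matrix.sub_apply, Matrix.of_apply,
      smul_eq_mul]
    split_ifs <;> first | (exfalso; omega) | ring
  have e3 : ThP n ⟨2*n - (j:ℕ) - 2, hj2⟩ ⟨i, hi1⟩ = 0 := by
    simp only [ThP, tridiag, Matrix.smul_apply, Matrix.sub_apply, Matrix.of_apply,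
      smul_eq_mul]
    split_ifs <;> first | (exfalso; omega) | ring
  have e4 : ThP n ⟨2*n - (j:ℕ) - 2, hj2⟩ ⟨2*n - (i:ℕ) - 2, hi2⟩ = ThD n j i := by
    simp only [ThP, ThD, tridiag, Matrix.smul_apply, Matrix.sub_apply, Matrix.of_apply,
      smul_eq_mul]
    split_ifs <;> first | (exfalso; omega) | ring
  rw [e1, e2, e3, e4]
  ring

/-- `A_h^D = R_{o,h}^{⊗d} A_h^P E_{o,h}^{⊗d}`. -/
theorem AD_eq_restr_AP_ext (n d : ℕ) (hn : 2 ≤ n) (hd : 1 ≤ d) (c : ℝ) :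
    AD n d c = kronPow d (oddRestr n) * AP n d c * kronPow d (oddExt n) := by
  have hRE : oddRestr n * oddExt n = 1 := RE_eq_one n hn
  rw [AD, AP]
  rw [Matrix.mul_add, Matrix.add_mul]
  rw [kron_sandwich (oddRestr n) (oddExt n) (ThP n) hRE, RTE_eq n hn]
  congr 1
  rw [Matrix.mul_smul, Matrix.smul_mul, Matrix.mul_one, kronPow_mul, hRE, kronPow_one]
end
end

section
/- Let n ≥ 2, N = 2n, h = 1/n, d ≥ 1, and c ∈ ℝ. If u ∈ ℝ^{(n−1)^d} satisfies A_h^D u = f, then A_h^P (E_{o,h}^{⊗d} u) = E_{o,h}^{⊗d} f. -/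
open Matrix Finset

noncomputable section

lemma collapse {a d : ℕ} (t : Fin d) (w : Fin d → Fin a) (H : Fin a → ℝ) (c : Fin d → ℝ) :
    ∑ m : Fin d → Fin a, (H (m t) * ∏ s ∈ Finset.univ.erase t, (if m s = w s then c s else 0))
      = (∑ x, H x) * ∏ s ∈ Finset.univ.erase t, c s := by
  classical
  have h1 : ∀ m : Fin d → Fin a, (∏ s ∈ Finset.univ.erase t, if m s = w s then c s else 0)
      = if (∀ s ∈ Finset.univ.erase t, m s = w s) then ∏ s ∈ Finset.univ.erase t, c s else 0 := by
    intro m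
    split_ifs with h
    · exact Finset.prod_congr rfl fun s hs => by rw [if_pos (h s hs)]
    · push_neg at h
      obtain ⟨s, hs, hne⟩ := h
      exact Finset.prod_eq_zero hs (by rw [if_neg hne])
  simp only [h1, mul_ite, mul_zero]
  rw [← Finset.sum_filter]
  have h2 : (Finset.univ.filter (fun m : Fin d → Fin a => ∀ s ∈ Finset.univ.erase t, m s = w s))
      = Finset.univ.image (Function.update w t) := by
    ext m
    simp only [Finset.mem_filter, Finset.mem_univ, true_and, Finset.mem_image]
    constructor
    · intro h
      refine ⟨m t, funext fun s => ?_⟩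
      by_cases hs : s = t
      · subst hs; simp [Function.update]
      · rw [Function.update_of_ne hs]
        exact (h s (Finset.mem_erase.mpr ⟨hs, Finset.mem_univ s⟩)).symm
    · rintro ⟨x, rfl⟩ s hs
      exact Function.update_of_ne (Finset.mem_erase.mp hs).1 x w
  rw [h2, Finset.sum_image (fun x _ y _ hxy => by
    have := congrFun hxy t; simpa using this)]
  simp [Finset.sum_mul]


lemma kron_commute (a b : ℕ) (d : ℕ) (E : Matrix (Fin a) (Fin b) ℝ)
    (T : Matrix (Fin a) (Fin a) ℝ) (S : Matrix (Fin b) (Fin b) ℝ) (h : T * E = E * S) :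
    ((∑ t : Fin d, Matrix.of fun i j =>
      T (i t) (j t) * ∏ s ∈ Finset.univ.erase t, (if i s = j s then (1 : ℝ) else 0) : Matrix (Fin d → Fin a) (Fin d → Fin a) ℝ) * (Matrix.of (fun (i : Fin d → Fin a) (j : Fin d → Fin b) => ∏ s, E (i s) (j s)) : Matrix (Fin d → Fin a) (Fin d → Fin b) ℝ) : Matrix (Fin d → Fin a) (Fin d → Fin b) ℝ)
    = (Matrix.of (fun (i : Fin d → Fin a) (j : Fin d → Fin b) => ∏ s, E (i s) (j s)) : Matrix (Fin d → Fin a) (Fin d → Fin b) ℝ) *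
      (∑ t : Fin d, Matrix.of fun i j =>
      S (i t) (j t) * ∏ s ∈ Finset.univ.erase t, (if i s = j s then (1 : ℝ) else 0) : Matrix (Fin d → Fin b) (Fin d → Fin b) ℝ) := by
  rw [Matrix.sum_mul, Matrix.mul_sum]
  refine Finset.sum_congr rfl fun t _ => ?_
  ext i j
  simp only [Matrix.mul_apply, Matrix.of_apply]
  have hL : ∀ m : Fin d → Fin a,
      (T (i t) (m t) * ∏ s ∈ Finset.univ.erase t, (if i s = m s then (1:ℝ) else 0)) * ∏ s, E (m s) (j s)
      = (T (i t) (m t) * E (m t) (j t)) * ∏ s ∈ Finset.univ.erase t, (if m s = i s then E (i s) (j s) else 0) := by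
    intro m
    rw [← Finset.mul_prod_erase Finset.univ (fun s => E (m s) (j s)) (Finset.mem_univ t)]
    have : ∏ s ∈ Finset.univ.erase t, (if m s = i s then E (i s) (j s) else 0)
        = ∏ s ∈ Finset.univ.erase t, ((if i s = m s then (1:ℝ) else 0) * E (m s) (j s)) := by
      refine Finset.prod_congr rfl fun s _ => ?_
      by_cases hs : m s = i s
      · simp [hs]
      · simp [hs, Ne.symm hs]
    rw [this, Finset.prod_mul_distrib]
    ring
  have hRR : ∀ m : Fin d → Fin b,
      (∏ s, E (i s) (m s) : ℝ) * (S (m t) (j t) * ∏ s ∈ Finset.univ.erase t, (if m s = j s then (1:ℝ) else 0))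
      = (E (i t) (m t) * S (m t) (j t)) * ∏ s ∈ Finset.univ.erase t, (if m s = j s then E (i s) (j s) else 0) := by
    intro m
    rw [← Finset.mul_prod_erase Finset.univ (fun s => E (i s) (m s)) (Finset.mem_univ t)]
    have : ∏ s ∈ Finset.univ.erase t, (if m s = j s then E (i s) (j s) else 0)
        = ∏ s ∈ Finset.univ.erase t, (E (i s) (m s) * (if m s = j s then (1:ℝ) else 0)) := by
      refine Finset.prod_congr rfl fun s _ => ?_
      by_cases hs : m s = j s
      · simp [hs]
      · simp [hs]
    rw [this, Finset.prod_mul_distrib]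
    ring
  simp only [hL, hRR]
  rw [collapse t i (fun x => T (i t) x * E x (j t)) (fun s => E (i s) (j s)),
    collapse t j (fun x => E (i t) x * S x (j t)) (fun s => E (i s) (j s)),
    ← Matrix.mul_apply, ← Matrix.mul_apply, h]

set_option maxHeartbeats 1000000 in
lemma base (n : ℕ) (hn : 2 ≤ n) : ThP n * oddExt n = oddExt n * ThD n := by
  unfold ThP ThD
  rw [Matrix.smul_mul, Matrix.mul_smul]
  congr 1
  ext k i
  obtain ⟨K, hK⟩ := k
  obtain ⟨I, hI⟩ := i
  have hilt : I < 2 * n := by omega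
  have hm2lt : 2 * n - I - 2 < 2 * n := by omega
  have hE : ∀ m : Fin (2 * n), oddExt n m ⟨I, hI⟩
      = (if m = ⟨I, hilt⟩ then (1:ℝ) else 0) + (if m = ⟨2 * n - I - 2, hm2lt⟩ then (-1:ℝ) else 0) := by
    intro m
    obtain ⟨M, hM⟩ := m
    simp only [oddExt, Matrix.of_apply, Fin.mk.injEq]
    split_ifs <;> first | (exfalso; omega) | norm_num
  have hL : ∀ P0 : Matrix (Fin (2*n)) (Fin (2*n)) ℝ,
      (P0 * oddExt n) ⟨K, hK⟩ ⟨I, hI⟩ = P0 ⟨K, hK⟩ ⟨I, hilt⟩ - P0 ⟨K, hK⟩ ⟨2 * n - I - 2, hm2lt⟩ := by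
    intro P0
    simp only [Matrix.mul_apply, hE, mul_add, Finset.sum_add_distrib, mul_ite, mul_one,
      mul_neg_one, mul_zero]
    rw [Finset.sum_ite_eq' Finset.univ _ (fun m => P0 ⟨K, hK⟩ m),
      Finset.sum_ite_eq' Finset.univ _ (fun m => -P0 ⟨K, hK⟩ m), if_pos (Finset.mem_univ _),
      if_pos (Finset.mem_univ _)]
    ring
  have hE2 : ∀ j : Fin (n - 1), oddExt n ⟨K, hK⟩ j
      = (if K = (j : ℕ) then (1:ℝ) else 0)
        + (if K + (j : ℕ) + 2 = 2 * n then (-1:ℝ) else 0) := by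
    intro j
    have hj : (j : ℕ) < n - 1 := j.isLt
    simp only [oddExt, Matrix.of_apply]
    split_ifs <;> first | (exfalso; omega) | norm_num
  have hRsplit : (oddExt n * tridiag (n-1)) ⟨K, hK⟩ ⟨I, hI⟩
      = (∑ j : Fin (n-1), if K = (j : ℕ) then tridiag (n-1) j ⟨I, hI⟩ else 0)
        + (∑ j : Fin (n-1), if K + (j : ℕ) + 2 = 2 * n then -tridiag (n-1) j ⟨I, hI⟩ else 0) := by
    simp only [Matrix.mul_apply, hE2, add_mul, Finset.sum_add_distrib, ite_mul, one_mul,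
      neg_one_mul, zero_mul]
  rw [hL, hRsplit]
  clear hL hRsplit hE hE2
  by_cases hk1 : K < n - 1
  case pos =>
    have e1 : (∑ j : Fin (n-1), if K = (j : ℕ) then tridiag (n-1) j ⟨I, hI⟩ else 0)
        = tridiag (n-1) ⟨K, hk1⟩ ⟨I, hI⟩ := by
      have hc : ∀ j : Fin (n-1), (K = (j : ℕ)) = (j = (⟨K, hk1⟩ : Fin (n-1))) := by
        intro j; rw [eq_iff_iff, Fin.ext_iff]; exact ⟨fun h => h.symm, fun h => h.symm⟩
      simp only [hc]
      rw [Finset.sum_ite_eq' Finset.univ _ (fun j => tridiag (n-1) j ⟨I, hI⟩),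
        if_pos (Finset.mem_univ _)]
    have e2 : (∑ j : Fin (n-1), if K + (j : ℕ) + 2 = 2 * n then -tridiag (n-1) j ⟨I, hI⟩ else 0)
        = 0 := Finset.sum_eq_zero fun j _ => if_neg (by have := j.isLt; omega)
    rw [e1, e2]
    clear e1 e2
    simp only [Matrix.sub_apply, Matrix.of_apply, tridiag]
    rw [if_neg (show ¬(K = 0 ∧ I = 2*n - 1) by omega),
      if_neg (show ¬(K = 2*n - 1 ∧ I = 0) by omega),
      if_neg (show ¬(K = 2*n - I - 2) by omega),
      if_neg (show ¬(K + 1 = 2*n - I - 2 ∨ 2*n - I - 2 + 1 = K) by omega),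
      if_neg (show ¬(K = 0 ∧ 2*n - I - 2 = 2*n - 1) by omega),
      if_neg (show ¬(K = 2*n - 1 ∧ 2*n - I - 2 = 0) by omega)]
    split_ifs <;> first | (exfalso; omega) | norm_num
  case neg =>
    have e1 : (∑ j : Fin (n-1), if K = (j : ℕ) then tridiag (n-1) j ⟨I, hI⟩ else 0)
        = 0 := Finset.sum_eq_zero fun j _ => if_neg (by have := j.isLt; omega)
    by_cases hk2 : n ≤ K ∧ K ≤ 2*n - 2
    case pos =>
      have hjlt : 2*n - K - 2 < n - 1 := by omega
      have e2 : (∑ j : Fin (n-1), if K + (j : ℕ) + 2 = 2 * n then -tridiag (n-1) j ⟨I, hI⟩ else 0)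
          = -tridiag (n-1) ⟨2*n - K - 2, hjlt⟩ ⟨I, hI⟩ := by
        have hc : ∀ j : Fin (n-1), (K + (j : ℕ) + 2 = 2 * n)
            = (j = (⟨2*n - K - 2, hjlt⟩ : Fin (n-1))) := by
          intro j; rw [eq_iff_iff, Fin.ext_iff]
          constructor <;> (intro hh; simp only [] at hh ⊢; omega)
        simp only [hc]
        rw [Finset.sum_ite_eq' Finset.univ _ (fun j => -tridiag (n-1) j ⟨I, hI⟩),
          if_pos (Finset.mem_univ _)]
      rw [e1, e2]
      clear e1 e2
      simp only [Matrix.sub_apply, Matrix.of_apply, tridiag]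
      rw [if_neg (show ¬(K = I) by omega),
        if_neg (show ¬(K + 1 = I ∨ I + 1 = K) by omega),
        if_neg (show ¬(K = 0 ∧ I = 2*n - 1) by omega),
        if_neg (show ¬(K = 2*n - 1 ∧ I = 0) by omega),
        if_neg (show ¬(K = 0 ∧ 2*n - I - 2 = 2*n - 1) by omega),
        if_neg (show ¬(K = 2*n - 1 ∧ 2*n - I - 2 = 0) by omega)]
      split_ifs <;> first | (exfalso; omega) | norm_num
    case neg =>
      have e2 : (∑ j : Fin (n-1), if K + (j : ℕ) + 2 = 2 * n then -tridiag (n-1) j ⟨I, hI⟩ else 0)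
          = 0 := Finset.sum_eq_zero fun j _ => if_neg (by have := j.isLt; omega)
      rw [e1, e2]
      clear e1 e2
      simp only [Matrix.sub_apply, Matrix.of_apply, tridiag]
      rw [if_neg (show ¬(K = I) by omega),
        if_neg (show ¬(K = 0 ∧ I = 2*n - 1) by omega),
        if_neg (show ¬(K = 2*n - I - 2) by omega),
        if_neg (show ¬(K = 0 ∧ 2*n - I - 2 = 2*n - 1) by omega),
        if_neg (show ¬(K = 2*n - 1 ∧ 2*n - I - 2 = 0) by omega)]
      split_ifs <;> first | (exfalso; omega) | norm_num

lemma kron_commute' (n d : ℕ) (hn : 2 ≤ n) :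
    kronSumId d (ThP n) * kronPow d (oddExt n) = kronPow d (oddExt n) * kronSumId d (ThD n) := by
  unfold kronSumId kronPow
  exact kron_commute _ _ d _ _ _ (base n hn)

/-- if `A_h^D u = f`, then `A_h^P (E_{o,h}^{⊗d} u) = E_{o,h}^{⊗d} f`. -/
theorem AP_ext_of_AD (n d : ℕ) (hn : 2 ≤ n) (hd : 1 ≤ d) (c : ℝ)
    (u f : (Fin d → Fin (n - 1)) → ℝ) (hu : AD n d c *ᵥ u = f) :
    AP n d c *ᵥ (kronPow d (oddExt n) *ᵥ u) = kronPow d (oddExt n) *ᵥ f := by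
  subst hu
  rw [mulVec_mulVec, mulVec_mulVec]
  congr 1
  unfold AP AD
  rw [Matrix.add_mul, Matrix.mul_add, Matrix.smul_mul, Matrix.mul_smul, Matrix.one_mul,
    Matrix.mul_one, kron_commute' n d hn]
end
end
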